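/- Let a_s, b_s, a_p, b_p > 0 and P > 0, and let X and Y be independent real random variables with X having the Gamma distribution with shape a_s and scale b_s, and Y having the Gamma distribution with shape a_p and scale b_p. Then the estimated data rate Ĉ = log₂(1 + P·X/Y) has a law absolutely continuous with respect to Lebesgue measure, with density f(x) = 2^x ln 2 · (2^x − 1)^{a_s − 1} · Γ(a_s + a_p) / (Γ(a_s) Γ(a_p) (b_s P)^{a_s} b_p^{a_p}) · (1/b_p + (2^x − 1)/(b_s P))^{−(a_s + a_p)} for x > 0 and f(x) = 0 for x ≤ 0. (This is the density of Ĉ_s claimed in Lemma 5, with the exponent −(a_s + a_p) on the last factor making the formula a probability density.) -/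

import Mathlib

open MeasureTheory ProbabilityTheory Real Set
open scoped NNReal ENNReal

/-- The Gamma distribution with shape `a > 0` and scale `b > 0`:
the measure on `ℝ` with density `x ↦ x^(a-1) * exp (-x/b) / (Γ a * b^a)` on `(0, ∞)`
and `0` elsewhere. -/
noncomputable def gammaScaleMeasure (a b : ℝ) : Measure ℝ :=
  volume.withDensity fun x =>
    ENNReal.ofReal (if 0 < x then x ^ (a - 1) * Real.exp (-(x / b)) / (Real.Gamma a * b ^ a) else 0)

/-- Let `X` and `Y` be independent with `X` Gamma (shape `a_s`, scale `b_s`)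
and `Y` Gamma (shape `a_p`, scale `b_p`), and `P > 0`. Then the estimated data rate
`Ĉ = log₂ (1 + P X / Y)` has density
`x ↦ 2^x ln 2 · (2^x - 1)^(a_s - 1) · Γ(a_s + a_p) / (Γ(a_s) Γ(a_p) (b_s P)^(a_s) b_p^(a_p)) ·
(1/b_p + (2^x - 1)/(b_s P))^(-(a_s + a_p))` for `x > 0` and `0` for `x ≤ 0`. -/

lemma lintegral_image_eq_lintegral_abs_deriv_mul {s : Set ℝ} {f : ℝ → ℝ} {f' : ℝ → ℝ}
    (hs : MeasurableSet s) (hf' : ∀ x ∈ s, HasDerivWithinAt f (f' x) s x)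
    (hf : InjOn f s) (g : ℝ → ℝ≥0∞) :
    ∫⁻ x in f '' s, g x = ∫⁻ x in s, ENNReal.ofReal |f' x| * g (f x) := by
  simpa only [ContinuousLinearMap.det_toSpanSingleton] using
    lintegral_image_eq_lintegral_abs_det_fderiv_mul volume hs
      (fun x hx => (hf' x hx).hasFDerivWithinAt) hf g

lemma setLIntegral_inter_of_vanish {g : ℝ → ℝ≥0∞} {A B : Set ℝ}
    (hA : MeasurableSet A) (hB : MeasurableSet B) (h : ∀ y ∉ A, g y = 0) :
    ∫⁻ y in B, g y = ∫⁻ y in B ∩ A, g y := by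
  rw [← lintegral_indicator hB, ← lintegral_indicator (hB.inter hA)]
  congr 1; funext y
  by_cases hyA : y ∈ A <;> by_cases hyB : y ∈ B <;>
    simp [Set.indicator, hyA, hyB, h y]

lemma lintegral_eq_Ioi_of_vanish {g : ℝ → ℝ≥0∞} (h : ∀ y ∉ Ioi (0:ℝ), g y = 0) :
    ∫⁻ y, g y = ∫⁻ y in Ioi (0:ℝ), g y := by
  rw [← lintegral_indicator measurableSet_Ioi]
  congr 1; funext y
  by_cases hy : y ∈ Ioi (0:ℝ) <;> simp [Set.indicator, hy, h y]

lemma gammaScaleMeasure_eq_gammaMeasure (a b : ℝ) (ha : 0 < a) (hb : 0 < b) :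
    gammaScaleMeasure a b = gammaMeasure a b⁻¹ := by
  unfold gammaScaleMeasure gammaMeasure
  apply withDensity_congr_ae
  have h0 : (volume : Measure ℝ) ({0}ᶜ)ᶜ = 0 := by simp
  filter_upwards [compl_mem_ae_iff.mpr h0] with x hx
  simp only [mem_compl_iff, mem_singleton_iff, not_not] at hx
  rcases lt_trichotomy x 0 with h | h | h
  · rw [if_neg (by linarith), gammaPDF_of_neg h]
    simp
  · exact absurd h hx.elim
  · rw [if_pos h, gammaPDF_of_nonneg h.le]
    congr 1
    have hG : Real.Gamma a ≠ 0 := (Real.Gamma_pos_of_pos ha).ne'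
    rw [show x / b = b⁻¹ * x from div_eq_inv_mul x b, Real.inv_rpow hb.le]
    have hba : (0:ℝ) < b ^ a := Real.rpow_pos_of_pos hb a
    field_simp

lemma setLIntegral_gammaPDF_Ioi {a r : ℝ} (ha : 0 < a) (hr : 0 < r) :
    ∫⁻ y in Ioi (0:ℝ), gammaPDF a r y = 1 := by
  have h := lintegral_gammaPDF_eq_one ha hr (r := r)
  rw [← lintegral_add_compl (gammaPDF a r) measurableSet_Ioi] at h
  have h2 : ∫⁻ y in (Ioi (0:ℝ))ᶜ, gammaPDF a r y = 0 := by
    rw [compl_Ioi]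
    rw [setLIntegral_congr (Iio_ae_eq_Iic (a := (0:ℝ))).symm]
    exact lintegral_gammaPDF_of_nonpos le_rfl
  rw [h2, add_zero] at h
  exact h

lemma lintegral_rpow_exp_Ioi {d l : ℝ} (hd : 0 < d) (hl : 0 < l) :
    ∫⁻ y in Ioi (0:ℝ), ENNReal.ofReal (y ^ (d - 1) * Real.exp (-(l * y)))
      = ENNReal.ofReal (Real.Gamma d * l ^ (-d)) := by
  have hG : 0 < Real.Gamma d := Real.Gamma_pos_of_pos hd
  have hld : (0:ℝ) < l ^ d := Real.rpow_pos_of_pos hl d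
  have key : ∀ y ∈ Ioi (0:ℝ),
      ENNReal.ofReal (y ^ (d - 1) * Real.exp (-(l * y)))
        = ENNReal.ofReal (Real.Gamma d * l ^ (-d)) * gammaPDF d l y := by
    intro y hy
    rw [gammaPDF_of_nonneg (le_of_lt hy), ← ENNReal.ofReal_mul (by positivity)]
    congr 1
    rw [Real.rpow_neg hl.le]
    field_simp
  rw [setLIntegral_congr_fun measurableSet_Ioi key, lintegral_const_mul]
  · rw [setLIntegral_gammaPDF_Ioi hd hl, mul_one]
  · exact measurable_gammaPDFReal d l |>.ennreal_ofReal

lemma lintegral_eq_Ioi_of_neg_vanish {g : ℝ → ℝ≥0∞} (h : ∀ y < (0:ℝ), g y = 0) :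
    ∫⁻ y, g y = ∫⁻ y in Ioi (0:ℝ), g y := by
  rw [← lintegral_indicator measurableSet_Ioi]
  apply lintegral_congr_ae
  have h0 : (volume : Measure ℝ) {(0:ℝ)} = 0 := Real.volume_singleton
  filter_upwards [compl_mem_ae_iff.mpr h0] with y hy
  simp only [mem_compl_iff, mem_singleton_iff, not_not] at hy
  rcases lt_trichotomy y 0 with hc | hc | hc
  · simp [Set.indicator, not_lt.mpr hc.le, h y hc, hc.not_gt]
  · exact absurd hc hy.elim
  · simp [Set.indicator, mem_Ioi, hc]

lemma setLIntegral_inter_Ioi_of_neg_vanish {g : ℝ → ℝ≥0∞} {B : Set ℝ}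
    (hB : MeasurableSet B) (h : ∀ y < (0:ℝ), g y = 0) :
    ∫⁻ y in B, g y = ∫⁻ y in B ∩ Ioi (0:ℝ), g y := by
  rw [← lintegral_indicator hB, ← lintegral_indicator (hB.inter measurableSet_Ioi)]
  apply lintegral_congr_ae
  have h0 : (volume : Measure ℝ) {(0:ℝ)} = 0 := Real.volume_singleton
  filter_upwards [compl_mem_ae_iff.mpr h0] with y hy
  simp only [mem_compl_iff, mem_singleton_iff, not_not] at hy
  by_cases hyB : y ∈ B
  · rcases lt_trichotomy y 0 with hc | hc | hc
    · simp [Set.indicator, hyB, h y hc]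
    · exact absurd hc hy.elim
    · simp [Set.indicator, hyB, mem_Ioi, hc]
  · simp [Set.indicator, hyB]

lemma map_phi_gamma (as bs ap bp P : ℝ) (has : 0 < as) (hbs : 0 < bs) (hap : 0 < ap)
    (hbp : 0 < bp) (hP : 0 < P) :
    Measure.map (fun p : ℝ × ℝ => Real.logb 2 (1 + P * p.1 / p.2))
      ((gammaMeasure as bs⁻¹).prod (gammaMeasure ap bp⁻¹)) =
      volume.withDensity fun x =>
        ENNReal.ofReal (if 0 < x then
          (2 : ℝ) ^ x * Real.log 2 * ((2 : ℝ) ^ x - 1) ^ (as - 1) * Real.Gamma (as + ap) /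
              (Real.Gamma as * Real.Gamma ap * (bs * P) ^ as * bp ^ ap) *
            (1 / bp + ((2 : ℝ) ^ x - 1) / (bs * P)) ^ (-(as + ap))
        else 0) := by
  have hrs : (0:ℝ) < bs⁻¹ := inv_pos.mpr hbs
  have hrp : (0:ℝ) < bp⁻¹ := inv_pos.mpr hbp
  haveI hprob1 : IsProbabilityMeasure (gammaMeasure as bs⁻¹) := isProbabilityMeasure_gammaMeasure has hrs
  haveI hprob2 : IsProbabilityMeasure (gammaMeasure ap bp⁻¹) := isProbabilityMeasure_gammaMeasure hap hrp
  set φ : ℝ × ℝ → ℝ := fun p => Real.logb 2 (1 + P * p.1 / p.2) with hφ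
  have hφm : Measurable φ := by
    have : Measurable fun z : ℝ => Real.logb 2 z := Real.measurable_log.div_const (Real.log 2)
    exact this.comp (measurable_const.add ((measurable_fst.const_mul P).div measurable_snd))
  -- exponential change of variables data
  have h2 : (1:ℝ) < 2 := one_lt_two
  have hrpow_mono : StrictMono fun t : ℝ => (2:ℝ) ^ t :=
    fun u v huv => (Real.rpow_lt_rpow_left_iff h2).mpr huv
  ext s hs
  rw [Measure.map_apply hφm hs, withDensity_apply _ hs,
    Measure.prod_apply_symm (hφm hs)]
  have hGmeas : Measurable fun y =>
      (gammaMeasure as bs⁻¹) ((fun x => (x, y)) ⁻¹' (φ ⁻¹' s)) :=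
    measurable_measure_prodMk_right (hφm hs)
  have hpdfm2 : Measurable (gammaPDF ap bp⁻¹) := (measurable_gammaPDFReal ap bp⁻¹).ennreal_ofReal
  rw [show gammaMeasure ap bp⁻¹ = volume.withDensity (gammaPDF ap bp⁻¹) from rfl,
    lintegral_withDensity_eq_lintegral_mul volume hpdfm2 hGmeas]
  rw [lintegral_eq_Ioi_of_neg_vanish
    (fun y hy => by simp [gammaPDF_of_neg hy])]
  -- rewrite the integrand for y > 0 using the change of variables
  have hinner : ∀ y ∈ Ioi (0:ℝ),
      (gammaPDF ap bp⁻¹ * fun y => (gammaMeasure as bs⁻¹) ((fun x => (x, y)) ⁻¹' (φ ⁻¹' s))) y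
        = ∫⁻ t in s ∩ Ioi 0,
            gammaPDF ap bp⁻¹ y * (ENNReal.ofReal |y * ((2:ℝ) ^ t * Real.log 2) / P|
              * gammaPDF as bs⁻¹ (y * ((2:ℝ) ^ t - 1) / P)) := by
    intro y hy
    rw [mem_Ioi] at hy
    simp only [Pi.mul_apply]
    set ψ : ℝ → ℝ := fun t => y * ((2:ℝ) ^ t - 1) / P with hψdef
    have hψderiv : ∀ t ∈ s ∩ Ioi (0:ℝ),
        HasDerivWithinAt ψ (y * ((2:ℝ) ^ t * Real.log 2) / P) (s ∩ Ioi 0) t := by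
      intro t _
      have h1 : HasDerivAt (fun t : ℝ => (2:ℝ) ^ t) ((2:ℝ) ^ t * Real.log 2) t :=
        (Real.hasStrictDerivAt_const_rpow two_pos t).hasDerivAt
      exact (((h1.sub_const 1).const_mul y).div_const P).hasDerivWithinAt
    have hψinj : InjOn ψ (s ∩ Ioi 0) := by
      intro t1 _ t2 _ hteq
      have : (2:ℝ) ^ t1 = (2:ℝ) ^ t2 := by
        simp only [hψdef] at hteq
        rw [div_left_inj' hP.ne', mul_right_inj' hy.ne'] at hteq
        linarith
      exact hrpow_mono.injective this
    have hAmeas : MeasurableSet ((fun x => (x, y)) ⁻¹' (φ ⁻¹' s)) :=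
      (hφm.comp (measurable_id.prodMk measurable_const)) hs
    have himage : ((fun x => (x, y)) ⁻¹' (φ ⁻¹' s)) ∩ Ioi 0 = ψ '' (s ∩ Ioi 0) := by
      ext x
      simp only [mem_inter_iff, mem_preimage, mem_image, mem_Ioi, hφ]
      constructor
      · rintro ⟨hxs, hx⟩
        refine ⟨Real.logb 2 (1 + P * x / y), ⟨hxs, ?_⟩, ?_⟩
        · apply Real.logb_pos h2
          have : 0 < P * x / y := by positivity
          linarith
        · have hz : (0:ℝ) < 1 + P * x / y := by positivity
          rw [hψdef]
          simp only
          rw [Real.rpow_logb two_pos (by norm_num) hz]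
          field_simp
          ring
      · rintro ⟨t, ⟨hts, ht⟩, rfl⟩
        have h2t : (1:ℝ) < (2:ℝ) ^ t := by
          have := hrpow_mono ht
          simpa using this
        have hψpos : 0 < ψ t := by
          rw [hψdef]
          have : (0:ℝ) < (2:ℝ) ^ t - 1 := by linarith
          positivity
        refine ⟨?_, hψpos⟩
        have : 1 + P * ψ t / y = (2:ℝ) ^ t := by
          rw [hψdef]
          field_simp
          ring
        rw [this, Real.logb_rpow two_pos (by norm_num)]
        exact hts
    rw [show gammaMeasure as bs⁻¹ = volume.withDensity (gammaPDF as bs⁻¹) from rfl,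
      withDensity_apply _ hAmeas,
      setLIntegral_inter_Ioi_of_neg_vanish hAmeas (fun x hx => gammaPDF_of_neg hx),
      himage,
      _root_.lintegral_image_eq_lintegral_abs_deriv_mul (hs.inter measurableSet_Ioi) hψderiv hψinj]
    exact (lintegral_const_mul' _ _ ENNReal.ofReal_ne_top).symm
  rw [setLIntegral_congr_fun measurableSet_Ioi hinner]
  -- swap the integrals
  have h2meas : Measurable fun t : ℝ => (2:ℝ) ^ t := by
    have he : (fun t : ℝ => (2:ℝ) ^ t) = fun t => Real.exp (Real.log 2 * t) := by
      funext t; rw [Real.rpow_def_of_pos two_pos]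
    rw [he]; exact Real.measurable_exp.comp (measurable_id.const_mul _)
  have hFmeas : Measurable (Function.uncurry fun (y : ℝ) (t : ℝ) =>
      gammaPDF ap bp⁻¹ y * (ENNReal.ofReal |y * ((2:ℝ) ^ t * Real.log 2) / P|
        * gammaPDF as bs⁻¹ (y * ((2:ℝ) ^ t - 1) / P))) := by
    refine Measurable.mul (f := fun p : ℝ × ℝ => gammaPDF ap bp⁻¹ p.1)
      (g := fun p : ℝ × ℝ => ENNReal.ofReal |p.1 * ((2:ℝ) ^ p.2 * Real.log 2) / P|
        * gammaPDF as bs⁻¹ (p.1 * ((2:ℝ) ^ p.2 - 1) / P)) ?_ ?_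
    · exact ((measurable_gammaPDFReal ap bp⁻¹).ennreal_ofReal).comp measurable_fst
    · refine Measurable.mul
        (f := fun p : ℝ × ℝ => ENNReal.ofReal |p.1 * ((2:ℝ) ^ p.2 * Real.log 2) / P|)
        (g := fun p : ℝ × ℝ => gammaPDF as bs⁻¹ (p.1 * ((2:ℝ) ^ p.2 - 1) / P)) ?_ ?_
      · apply Measurable.ennreal_ofReal
        apply Measurable.abs
        apply Measurable.div_const
        exact measurable_fst.mul ((h2meas.comp measurable_snd).mul measurable_const)
      · refine ((measurable_gammaPDFReal as bs⁻¹).ennreal_ofReal).comp ?_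
        apply Measurable.div_const
        exact measurable_fst.mul ((h2meas.comp measurable_snd).sub measurable_const)
  rw [lintegral_lintegral_swap (μ := volume.restrict (Ioi 0))
    (ν := volume.restrict (s ∩ Ioi 0)) hFmeas.aemeasurable]
  -- rewrite RHS restricting to positive t
  rw [setLIntegral_inter_Ioi_of_neg_vanish hs
    (fun t ht => by rw [if_neg (not_lt.mpr ht.le), ENNReal.ofReal_zero])]
  -- pointwise identification of the inner integral
  apply setLIntegral_congr_fun (hs.inter measurableSet_Ioi)
  rintro t ⟨-, ht⟩
  rw [mem_Ioi] at ht
  beta_reduce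
  rw [if_pos ht]
  have h2t : (1:ℝ) < (2:ℝ) ^ t := by simpa using hrpow_mono ht
  have h2t1 : (0:ℝ) ≤ (2:ℝ) ^ t - 1 := by linarith
  have hlog2 : 0 < Real.log 2 := Real.log_pos one_lt_two
  have hGs : 0 < Real.Gamma as := Real.Gamma_pos_of_pos has
  have hGp : 0 < Real.Gamma ap := Real.Gamma_pos_of_pos hap
  set l : ℝ := 1 / bp + ((2:ℝ) ^ t - 1) / (bs * P) with hldef
  have hlpos : 0 < l := by
    have h1 : (0:ℝ) < 1 / bp := by positivity
    have h2 : (0:ℝ) ≤ ((2:ℝ) ^ t - 1) / (bs * P) := div_nonneg h2t1 (by positivity)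
    rw [hldef]
    exact add_pos_of_pos_of_nonneg h1 h2
  set C : ℝ := (bp⁻¹) ^ ap / Real.Gamma ap * ((bs⁻¹) ^ as / Real.Gamma as) *
      ((2:ℝ) ^ t * Real.log 2 / P) * (((2:ℝ) ^ t - 1) / P) ^ (as - 1) with hCdef
  have hq : (0:ℝ) ≤ ((2:ℝ) ^ t - 1) / P := div_nonneg h2t1 hP.le
  have hCnn : 0 ≤ C := by
    apply mul_nonneg
    apply mul_nonneg
    apply mul_nonneg
    · exact div_nonneg (Real.rpow_nonneg (by positivity) _) hGp.le
    · exact div_nonneg (Real.rpow_nonneg (by positivity) _) hGs.le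
    · positivity
    · exact Real.rpow_nonneg hq _
  have key : ∀ y ∈ Ioi (0:ℝ),
      gammaPDF ap bp⁻¹ y * (ENNReal.ofReal |y * ((2:ℝ) ^ t * Real.log 2) / P|
        * gammaPDF as bs⁻¹ (y * ((2:ℝ) ^ t - 1) / P))
        = ENNReal.ofReal (C * (y ^ (as + ap - 1) * Real.exp (-(l * y)))) := by
    intro y hy
    rw [mem_Ioi] at hy
    have hψnn : (0:ℝ) ≤ y * ((2:ℝ) ^ t - 1) / P := by positivity
    have habs : (0:ℝ) ≤ y * ((2:ℝ) ^ t * Real.log 2) / P := by positivity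
    rw [gammaPDF_of_nonneg hy.le, gammaPDF_of_nonneg hψnn, abs_of_nonneg habs,
      ← ENNReal.ofReal_mul (by positivity), ← ENNReal.ofReal_mul (by positivity)]
    congr 1
    have hmr : (y * (((2:ℝ) ^ t - 1) / P)) ^ (as - 1)
        = y ^ (as - 1) * (((2:ℝ) ^ t - 1) / P) ^ (as - 1) := Real.mul_rpow hy.le hq
    have harg : y * ((2:ℝ) ^ t - 1) / P = y * (((2:ℝ) ^ t - 1) / P) := by ring
    have hexp : Real.exp (-(l * y))
        = Real.exp (-(bp⁻¹ * y)) * Real.exp (-(bs⁻¹ * (y * ((2:ℝ) ^ t - 1) / P))) := by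
      rw [← Real.exp_add]
      congr 1
      rw [hldef]
      field_simp
      ring
    have hyy : y ^ (as + ap - 1) = y ^ (ap - 1) * y ^ (as - 1) * y := by
      rw [show as + ap - 1 = (ap - 1) + ((as - 1) + 1) by ring, Real.rpow_add hy,
        Real.rpow_add hy, Real.rpow_one]
      ring
    rw [harg, hmr, hexp, hyy, hCdef]
    ring_nf
  rw [setLIntegral_congr_fun measurableSet_Ioi key]
  have hCsplit : ∀ y : ℝ, ENNReal.ofReal (C * (y ^ (as + ap - 1) * Real.exp (-(l * y))))
      = ENNReal.ofReal C * ENNReal.ofReal (y ^ (as + ap - 1) * Real.exp (-(l * y))) :=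
    fun y => ENNReal.ofReal_mul hCnn
  simp_rw [hCsplit]
  rw [lintegral_const_mul' _ _ ENNReal.ofReal_ne_top,
    lintegral_rpow_exp_Ioi (by positivity) hlpos,
    ← ENNReal.ofReal_mul hCnn]
  congr 1
  -- final real identity
  have hPas : P ^ as = P ^ (as - 1) * P := by
    have h := Real.rpow_add hP (as - 1) 1
    rw [Real.rpow_one] at h
    rw [show as - 1 + 1 = as from by ring] at h
    exact h
  rw [hCdef, Real.inv_rpow hbp.le, Real.inv_rpow hbs.le,
    Real.div_rpow h2t1 hP.le, Real.mul_rpow hbs.le hP.le, hPas]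
  have hbpap : (0:ℝ) < bp ^ ap := Real.rpow_pos_of_pos hbp ap
  have hbsas : (0:ℝ) < bs ^ as := Real.rpow_pos_of_pos hbs as
  have hPas1 : (0:ℝ) < P ^ (as - 1) := Real.rpow_pos_of_pos hP _
  field_simp

theorem estimated_rate_density {Ω : Type*} [MeasurableSpace Ω] (μ : Measure Ω)
    [IsProbabilityMeasure μ] (as bs ap bp P : ℝ)
    (has : 0 < as) (hbs : 0 < bs) (hap : 0 < ap) (hbp : 0 < bp) (hP : 0 < P)
    (X Y : Ω → ℝ) (hindep : IndepFun X Y μ)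
    (hX : Measure.map X μ = gammaScaleMeasure as bs)
    (hY : Measure.map Y μ = gammaScaleMeasure ap bp) :
    Measure.map (fun ω => Real.logb 2 (1 + P * X ω / Y ω)) μ =
      volume.withDensity fun x =>
        ENNReal.ofReal (if 0 < x then
          (2 : ℝ) ^ x * Real.log 2 * ((2 : ℝ) ^ x - 1) ^ (as - 1) * Real.Gamma (as + ap) /
              (Real.Gamma as * Real.Gamma ap * (bs * P) ^ as * bp ^ ap) *
            (1 / bp + ((2 : ℝ) ^ x - 1) / (bs * P)) ^ (-(as + ap))
        else 0) := by
  have hX1 : gammaScaleMeasure as bs = gammaMeasure as bs⁻¹ :=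
    gammaScaleMeasure_eq_gammaMeasure as bs has hbs
  have hY1 : gammaScaleMeasure ap bp = gammaMeasure ap bp⁻¹ :=
    gammaScaleMeasure_eq_gammaMeasure ap bp hap hbp
  haveI hp1 : IsProbabilityMeasure (gammaScaleMeasure as bs) := by
    rw [hX1]; exact isProbabilityMeasure_gammaMeasure has (inv_pos.mpr hbs)
  haveI hp2 : IsProbabilityMeasure (gammaScaleMeasure ap bp) := by
    rw [hY1]; exact isProbabilityMeasure_gammaMeasure hap (inv_pos.mpr hbp)
  have hXm : AEMeasurable X μ := by
    by_contra h
    rw [Measure.map_of_not_aemeasurable h] at hX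
    have h1 : (gammaScaleMeasure as bs) univ = 1 := measure_univ
    rw [← hX] at h1
    simp at h1
  have hYm : AEMeasurable Y μ := by
    by_contra h
    rw [Measure.map_of_not_aemeasurable h] at hY
    have h1 : (gammaScaleMeasure ap bp) univ = 1 := measure_univ
    rw [← hY] at h1
    simp at h1
  have hφm : Measurable (fun p : ℝ × ℝ => Real.logb 2 (1 + P * p.1 / p.2)) := by
    have h0 : Measurable fun z : ℝ => Real.logb 2 z := Real.measurable_log.div_const (Real.log 2)
    exact h0.comp (measurable_const.add ((measurable_fst.const_mul P).div measurable_snd))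
  have hcomp : Measure.map (fun ω => Real.logb 2 (1 + P * X ω / Y ω)) μ
      = Measure.map (fun p : ℝ × ℝ => Real.logb 2 (1 + P * p.1 / p.2))
          (Measure.map (fun ω => (X ω, Y ω)) μ) := by
    rw [AEMeasurable.map_map_of_aemeasurable hφm.aemeasurable (hXm.prodMk hYm)]
    rfl
  rw [hcomp, (indepFun_iff_map_prod_eq_prod_map_map hXm hYm).mp hindep, hX, hY, hX1, hY1]
  exact map_phi_gamma as bs ap bp P has hbs hap hbp hP
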